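/- Let f_0,…,f_m, g_0,…,g_n satisfy the generalized polymorphism identity with g_1,…,g_n, f_1,…,f_m balanced and nonconstant. If S is inclusion-maximal in the Fourier support of f_0 and each U_i (i ∈ S) is inclusion-maximal in the Fourier support of g_i, then T = ∪_{i∈S} U_i is inclusion-maximal in the Fourier support of g_0, and each V_j = {i ∈ S : j ∈ U_i} (j ∈ T) is inclusion-maximal in the Fourier support of f_j. -/

import Mathlib

open Finset

noncomputable def sgn (b : Bool) : ℝ := if b then 1 else -1

lemma sgn_sq (b : Bool) : sgn b * sgn b = 1 := by cases b <;> simp [sgn]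

lemma sgn_not (b : Bool) : sgn (!b) = - sgn b := by cases b <;> simp [sgn]

lemma sgn_pm (b : Bool) : sgn b = 1 ∨ sgn b = -1 := by cases b <;> simp [sgn]

noncomputable def chi {ι : Type*} [DecidableEq ι] (A : Finset ι) (σ : ι → Bool) : ℝ :=
  ∏ p ∈ A, sgn (σ p)

lemma chi_empty {ι : Type*} [DecidableEq ι] (σ : ι → Bool) : chi (∅ : Finset ι) σ = 1 := by
  simp [chi]

lemma chi_sq {ι : Type*} [DecidableEq ι] (A : Finset ι) (σ : ι → Bool) :
    chi A σ * chi A σ = 1 := by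
  rw [chi, ← Finset.prod_mul_distrib]
  exact Finset.prod_eq_one fun p _ => sgn_sq _

lemma chi_split {ι : Type*} [DecidableEq ι] {A B : Finset ι} (h : Disjoint A B) (σ : ι → Bool) :
    chi (A ∪ B) σ = chi A σ * chi B σ := by
  rw [chi, chi, chi, Finset.prod_union h]

lemma chi_mul {ι : Type*} [DecidableEq ι] (A B : Finset ι) (σ : ι → Bool) :
    chi A σ * chi B σ = chi (symmDiff A B) σ := by
  have hA : chi A σ = chi (A \ B) σ * chi (A ∩ B) σ := by
    have h := chi_split (A := A \ B) (B := A ∩ B)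
      (Finset.sdiff_disjoint.mono_right Finset.inter_subset_right) σ
    rw [Finset.sdiff_union_inter] at h
    exact h
  have hB : chi B σ = chi (B \ A) σ * chi (A ∩ B) σ := by
    have h := chi_split (A := B \ A) (B := A ∩ B)
      (Finset.sdiff_disjoint.mono_right Finset.inter_subset_left) σ
    rw [Finset.inter_comm, Finset.sdiff_union_inter] at h
    rw [Finset.inter_comm]
    exact h
  have hs : chi (symmDiff A B) σ = chi (A \ B) σ * chi (B \ A) σ := by
    rw [symmDiff_def]
    exact chi_split (disjoint_sdiff_sdiff) σ
  have h2 := chi_sq (A ∩ B) σ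
  rw [hA, hB, hs]
  linear_combination (chi (A \ B) σ * chi (B \ A) σ) * h2

lemma chi_sum {ι : Type*} [DecidableEq ι] [Fintype ι] (A : Finset ι) :
    ∑ σ : ι → Bool, chi A σ = if A = ∅ then (2 : ℝ) ^ Fintype.card ι else 0 := by
  rcases eq_or_ne A ∅ with rfl | hA
  · simp [chi_empty, Finset.card_univ, Fintype.card_fun]
  · simp only [if_neg hA]
    obtain ⟨p₀, hp₀⟩ := Finset.nonempty_iff_ne_empty.2 hA
    have key : ∀ σ : ι → Bool, chi A (Function.update σ p₀ (!σ p₀)) = - chi A σ := by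
      intro σ
      rw [chi, chi, ← Finset.mul_prod_erase A _ hp₀,
        ← Finset.mul_prod_erase A (fun p => sgn (σ p)) hp₀]
      have h1 : Function.update σ p₀ (!σ p₀) p₀ = !σ p₀ := Function.update_self _ _ _
      rw [h1, sgn_not]
      have h2 : ∀ p ∈ A.erase p₀, sgn (Function.update σ p₀ (!σ p₀) p) = sgn (σ p) := by
        intro p hp
        rw [Function.update_of_ne (Finset.ne_of_mem_erase hp)]
      rw [Finset.prod_congr rfl h2]
      ring
    have hinv : Function.Involutive (fun σ : ι → Bool => Function.update σ p₀ (!σ p₀)) := by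
      intro σ
      funext p
      rcases eq_or_ne p p₀ with rfl | hp
      · simp
      · simp [Function.update_of_ne hp]
    have hcomp := Equiv.sum_comp hinv.toPerm (chi A)
    simp only [Function.Involutive.coe_toPerm] at hcomp
    have h3 : ∑ σ : ι → Bool, chi A σ = - ∑ σ : ι → Bool, chi A σ := by
      calc ∑ σ : ι → Bool, chi A σ
          = ∑ σ : ι → Bool, chi A (Function.update σ p₀ (!σ p₀)) := hcomp.symm
        _ = ∑ σ : ι → Bool, - chi A σ := Finset.sum_congr rfl fun σ _ => key σ
        _ = - ∑ σ : ι → Bool, chi A σ := by rw [Finset.sum_neg_distrib]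
    linarith

lemma chi_inv {ι : Type*} [DecidableEq ι] [Fintype ι] (c : Finset ι → ℝ) (B : Finset ι) :
    ∑ σ : ι → Bool, chi B σ * ∑ A : Finset ι, c A * chi A σ
      = c B * (2 : ℝ) ^ Fintype.card ι := by
  have h1 : ∀ σ : ι → Bool, chi B σ * ∑ A : Finset ι, c A * chi A σ
      = ∑ A : Finset ι, c A * chi (symmDiff A B) σ := by
    intro σ
    rw [Finset.mul_sum]
    refine Finset.sum_congr rfl fun A _ => ?_
    rw [← chi_mul]
    ring
  simp only [h1]
  rw [Finset.sum_comm]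
  have h2 : ∀ A : Finset ι, ∑ σ : ι → Bool, c A * chi (symmDiff A B) σ
      = c A * if A = B then (2:ℝ) ^ Fintype.card ι else 0 := by
    intro A
    rw [← Finset.mul_sum, chi_sum]
    congr 1
    simp only [← Finset.bot_eq_empty, symmDiff_eq_bot]
  simp only [h2]
  simp [Finset.sum_ite_eq', mul_ite]

def rows {n m : ℕ} (B : Finset (Fin n × Fin m)) : Finset (Fin n) := B.image Prod.fst

def rowset {n m : ℕ} (B : Finset (Fin n × Fin m)) (i : Fin n) : Finset (Fin m) :=
  (B.filter (fun p => p.1 = i)).image Prod.snd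

lemma mem_rowset {n m : ℕ} {B : Finset (Fin n × Fin m)} {i : Fin n} {j : Fin m} :
    j ∈ rowset B i ↔ (i, j) ∈ B := by
  simp only [rowset, Finset.mem_image, Finset.mem_filter]
  constructor
  · rintro ⟨⟨a, b⟩, ⟨hab, rfl⟩, rfl⟩; exact hab
  · intro h; exact ⟨(i, j), ⟨h, rfl⟩, rfl⟩

lemma mem_rows {n m : ℕ} {B : Finset (Fin n × Fin m)} {i : Fin n} :
    i ∈ rows B ↔ rowset B i ≠ ∅ := by
  simp only [rows, Finset.mem_image, ← Finset.nonempty_iff_ne_empty]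
  constructor
  · rintro ⟨⟨a, b⟩, hab, rfl⟩; exact ⟨b, mem_rowset.2 hab⟩
  · rintro ⟨j, hj⟩; exact ⟨(i, j), mem_rowset.1 hj, rfl⟩

lemma chi_rows {n m : ℕ} (B : Finset (Fin n × Fin m)) (σ : Fin n × Fin m → Bool) :
    chi B σ = ∏ i : Fin n, chi (rowset B i) (fun j => σ (i, j)) := by
  rw [chi, ← Finset.prod_fiberwise_of_maps_to (g := Prod.fst) (t := Finset.univ)
    (fun p _ => Finset.mem_univ _) (fun p => sgn (σ p))]
  refine Finset.prod_congr rfl fun i _ => ?_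
  rw [chi, rowset, Finset.prod_image ?inj]
  case inj =>
    rintro ⟨a, b⟩ hab ⟨c, d⟩ hcd h
    simp only [Finset.mem_coe, Finset.mem_filter] at hab hcd
    simp_all [Prod.ext_iff]
  refine Finset.prod_congr rfl fun p hp => ?_
  have : (i, p.2) = p := by
    have := (Finset.mem_filter.1 hp).2
    simp_all [Prod.ext_iff]
  rw [this]

lemma coeff_compose {n m : ℕ} (F : (Fin n → ℝ) → ℝ) (G : Fin n → (Fin m → ℝ) → ℝ)
    (Fc : Finset (Fin n) → ℝ) (Gc : Fin n → Finset (Fin m) → ℝ)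
    (hF : ∀ x, F x = ∑ S : Finset (Fin n), Fc S * ∏ i ∈ S, x i)
    (hG : ∀ i y, G i y = ∑ T : Finset (Fin m), Gc i T * ∏ j ∈ T, y j)
    (hbal : ∀ i, Gc i ∅ = 0)
    (B : Finset (Fin n × Fin m)) :
    ∑ σ : Fin n × Fin m → Bool, chi B σ * F (fun i => G i (fun j => sgn (σ (i, j))))
      = ((2:ℝ) ^ m) ^ n * (Fc (rows B) * ∏ i ∈ rows B, Gc i (rowset B i)) := by
  have step1 : ∀ σ : Fin n × Fin m → Bool,
      chi B σ * F (fun i => G i (fun j => sgn (σ (i, j))))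
      = ∑ S' : Finset (Fin n), Fc S' *
          (chi B σ * ∏ i ∈ S', G i (fun j => sgn (σ (i, j)))) := by
    intro σ
    rw [hF, Finset.mul_sum]
    exact Finset.sum_congr rfl fun S' _ => by ring
  simp only [step1]
  rw [Finset.sum_comm]
  have step2 : ∀ S' : Finset (Fin n),
      ∑ σ : Fin n × Fin m → Bool, Fc S' * (chi B σ * ∏ i ∈ S', G i (fun j => sgn (σ (i, j))))
      = Fc S' * (((2:ℝ)^m)^n * ∏ i : Fin n,
          (if i ∈ S' then Gc i (rowset B i) else (if rowset B i = ∅ then 1 else 0))) := by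
    intro S'
    rw [← Finset.mul_sum]
    congr 1
    have hrw : ∀ σ : Fin n × Fin m → Bool,
        chi B σ * ∏ i ∈ S', G i (fun j => sgn (σ (i, j)))
        = ∏ i : Fin n, (chi (rowset B i) (fun j => σ (i, j)) *
            (if i ∈ S' then G i (fun j => sgn (σ (i, j))) else 1)) := by
      intro σ
      rw [Finset.prod_mul_distrib, ← chi_rows]
      congr 1
      rw [← Finset.prod_filter]
      congr 1
      simp [Finset.filter_mem_eq_inter]
    simp only [hrw]
    have curry : ∑ σ : Fin n × Fin m → Bool,
        ∏ i : Fin n, (chi (rowset B i) (fun j => σ (i, j)) *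
            (if i ∈ S' then G i (fun j => sgn (σ (i, j))) else 1))
        = ∑ ρ : Fin n → Fin m → Bool,
        ∏ i : Fin n, (chi (rowset B i) (ρ i) *
            (if i ∈ S' then G i (fun j => sgn (ρ i j)) else 1)) :=
      Fintype.sum_equiv (Equiv.curry _ _ _) _ _ (fun σ => rfl)
    have expand := Finset.prod_univ_sum (fun _ : Fin n => (Finset.univ : Finset (Fin m → Bool)))
      (fun i τ => chi (rowset B i) τ * (if i ∈ S' then G i (fun j => sgn (τ j)) else 1))
    rw [Fintype.piFinset_univ] at expand
    rw [curry, ← expand]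
    have inner : ∀ i : Fin n,
        ∑ τ : Fin m → Bool, (chi (rowset B i) τ *
            (if i ∈ S' then G i (fun j => sgn (τ j)) else 1))
        = (2:ℝ)^m * (if i ∈ S' then Gc i (rowset B i) else (if rowset B i = ∅ then 1 else 0)) := by
      intro i
      by_cases hi : i ∈ S'
      · simp only [if_pos hi]
        have hGc : ∀ τ : Fin m → Bool, G i (fun j => sgn (τ j))
            = ∑ T : Finset (Fin m), Gc i T * chi T τ := fun τ => hG i _
        simp only [hGc]
        rw [chi_inv, Fintype.card_fin]
        ring
      · simp only [if_neg hi, mul_one]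
        rw [chi_sum, Fintype.card_fin]
        split <;> ring
    rw [Finset.prod_congr rfl fun i _ => inner i, Finset.prod_mul_distrib]
    simp [Finset.prod_const, Finset.card_univ]
  simp only [step2]
  rw [Finset.sum_eq_single (rows B)]
  · have hprod : (∏ i : Fin n, (if i ∈ rows B then Gc i (rowset B i)
        else (if rowset B i = ∅ then 1 else 0)))
        = ∏ i ∈ rows B, Gc i (rowset B i) := by
      rw [← Finset.prod_subset (Finset.subset_univ (rows B)) ?vanish]
      · exact Finset.prod_congr rfl fun i hi => if_pos hi
      case vanish =>
        intro i _ hi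
        have hempty : rowset B i = ∅ := by
          by_contra h; exact hi (mem_rows.2 h)
        rw [if_neg hi, if_pos hempty]
    rw [hprod]
    ring
  · intro S' _ hne
    have hzero : (∏ i : Fin n, (if i ∈ S' then Gc i (rowset B i)
        else (if rowset B i = ∅ then 1 else 0))) = 0 := by
      by_cases h1 : S' ⊆ rows B
      · have h2 : ¬ rows B ⊆ S' := fun h2 => hne (Finset.Subset.antisymm h1 h2)
        obtain ⟨i₀, hi₀r, hi₀s⟩ := Finset.not_subset.1 h2
        refine Finset.prod_eq_zero (Finset.mem_univ i₀) ?_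
        rw [if_neg hi₀s, if_neg (mem_rows.1 hi₀r)]
      · obtain ⟨i₀, hi₀s, hi₀r⟩ := Finset.not_subset.1 h1
        have hempty : rowset B i₀ = ∅ := by
          by_contra h; exact hi₀r (mem_rows.2 h)
        refine Finset.prod_eq_zero (Finset.mem_univ i₀) ?_
        rw [if_pos hi₀s, hempty, hbal]
    rw [hzero]
    ring
  · intro h
    exact absurd (Finset.mem_univ _) h

def swapE (n m : ℕ) : (Fin n × Fin m → Bool) ≃ (Fin m × Fin n → Bool) where
  toFun σ := fun p => σ p.swap
  invFun σ := fun p => σ p.swap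
  left_inv σ := by funext p; simp
  right_inv σ := by funext p; simp

lemma chi_image_swap {n m : ℕ} (B : Finset (Fin n × Fin m)) (σ : Fin n × Fin m → Bool) :
    chi (B.image Prod.swap) (fun p => σ p.swap) = chi B σ := by
  rw [chi, chi, Finset.prod_image (fun p _ q _ h => Prod.swap_injective h)]
  simp

lemma mem_image_swap {n m : ℕ} {B : Finset (Fin n × Fin m)} {i : Fin n} {j : Fin m} :
    (j, i) ∈ B.image Prod.swap ↔ (i, j) ∈ B := by
  simp only [Finset.mem_image]
  constructor
  · rintro ⟨⟨a, b⟩, hab, h⟩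
    simp only [Prod.swap_prod_mk, Prod.mk.injEq] at h
    obtain ⟨rfl, rfl⟩ := h
    exact hab
  · intro h
    exact ⟨(i, j), h, rfl⟩

section Main

variable {n m : ℕ}
  (f : Fin (m + 1) → (Fin n → ℝ) → ℝ) (g : Fin (n + 1) → (Fin m → ℝ) → ℝ)
  (fc : Fin (m + 1) → Finset (Fin n) → ℝ) (gc : Fin (n + 1) → Finset (Fin m) → ℝ)

lemma central
    (hfexp : ∀ (j : Fin (m + 1)) (x : Fin n → ℝ),
      f j x = ∑ S : Finset (Fin n), fc j S * ∏ i ∈ S, x i)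
    (hgexp : ∀ (i : Fin (n + 1)) (y : Fin m → ℝ),
      g i y = ∑ T : Finset (Fin m), gc i T * ∏ j ∈ T, y j)
    (hbalf : ∀ j : Fin m, fc j.succ ∅ = 0)
    (hbalg : ∀ i : Fin n, gc i.succ ∅ = 0)
    (hpoly : ∀ z : Fin n → Fin m → ℝ, (∀ i j, z i j = 1 ∨ z i j = -1) →
      f 0 (fun i => g i.succ (z i)) = g 0 (fun j => f j.succ (fun i => z i j)))
    (B : Finset (Fin n × Fin m)) :
    fc 0 (rows B) * ∏ i ∈ rows B, gc i.succ (rowset B i)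
      = gc 0 (rows (B.image Prod.swap)) *
          ∏ j ∈ rows (B.image Prod.swap), fc j.succ (rowset (B.image Prod.swap) j) := by
  have h1 := coeff_compose (f 0) (fun i => g i.succ) (fc 0) (fun i => gc i.succ)
    (hfexp 0) (fun i => hgexp i.succ) (fun i => hbalg i) B
  have h2 := coeff_compose (g 0) (fun j => f j.succ) (gc 0) (fun j => fc j.succ)
    (hgexp 0) (fun j => hfexp j.succ) (fun j => hbalf j) (B.image Prod.swap)
  have hsum : ∑ σ : Fin n × Fin m → Bool,
      chi B σ * f 0 (fun i => g i.succ (fun j => sgn (σ (i, j))))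
      = ∑ σ' : Fin m × Fin n → Bool,
      chi (B.image Prod.swap) σ' * g 0 (fun j => f j.succ (fun i => sgn (σ' (j, i)))) := by
    refine Fintype.sum_equiv (swapE n m) _ _ fun σ => ?_
    have hc : chi (B.image Prod.swap) (swapE n m σ) = chi B σ := chi_image_swap B σ
    rw [hc]
    congr 1
    have hp := hpoly (fun i j => sgn (σ (i, j))) (fun i j => sgn_pm _)
    convert hp using 3
    rfl
  rw [h1, h2] at hsum
  have hpow : ((2:ℝ) ^ m) ^ n = ((2:ℝ) ^ n) ^ m := by
    rw [← pow_mul, ← pow_mul, Nat.mul_comm]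
  rw [hpow] at hsum
  have hne : ((2:ℝ) ^ n) ^ m ≠ 0 := by positivity
  exact mul_left_cancel₀ hne hsum

end Main

def colB {n m : ℕ} (T' : Finset (Fin m)) (W : Fin m → Finset (Fin n)) :
    Finset (Fin n × Fin m) :=
  Finset.univ.filter (fun p => p.2 ∈ T' ∧ p.1 ∈ W p.2)

lemma mem_colB {n m : ℕ} {T' : Finset (Fin m)} {W : Fin m → Finset (Fin n)}
    {i : Fin n} {j : Fin m} : (i, j) ∈ colB T' W ↔ j ∈ T' ∧ i ∈ W j := by
  simp [colB]

lemma rowset_colB {n m : ℕ} (T' : Finset (Fin m)) (W : Fin m → Finset (Fin n)) (i : Fin n) :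
    rowset (colB T' W) i = T'.filter (fun j => i ∈ W j) := by
  ext j
  rw [mem_rowset, mem_colB, Finset.mem_filter]

lemma rowsetT_colB {n m : ℕ} (T' : Finset (Fin m)) (W : Fin m → Finset (Fin n)) (j : Fin m) :
    rowset ((colB T' W).image Prod.swap) j = if j ∈ T' then W j else ∅ := by
  ext i
  rw [mem_rowset, mem_image_swap, mem_colB]
  split
  · simp_all
  · simp_all

lemma rowsT_colB {n m : ℕ} {T' : Finset (Fin m)} {W : Fin m → Finset (Fin n)}
    (hne : ∀ j ∈ T', (W j).Nonempty) :
    rows ((colB T' W).image Prod.swap) = T' := by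
  ext j
  rw [mem_rows, rowsetT_colB]
  split
  · next h => simpa [h] using (hne j h).ne_empty
  · next h => simpa using h

lemma mem_rows_colB {n m : ℕ} {T' : Finset (Fin m)} {W : Fin m → Finset (Fin n)} {i : Fin n} :
    i ∈ rows (colB T' W) ↔ ∃ j ∈ T', i ∈ W j := by
  rw [mem_rows, rowset_colB, ← Finset.nonempty_iff_ne_empty, Finset.filter_nonempty_iff]

lemma support_nonempty {α : Type*} [Fintype α] [DecidableEq α] {c : Finset α → ℝ}
    (hc : c ∅ = 0) {x x' : α → ℝ}
    (h : (∑ A : Finset α, c A * ∏ i ∈ A, x i) ≠ ∑ A : Finset α, c A * ∏ i ∈ A, x' i) :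
    ∃ A : Finset α, A.Nonempty ∧ c A ≠ 0 := by
  by_contra hall
  push_neg at hall
  have key : ∀ y : α → ℝ, (∑ A : Finset α, c A * ∏ i ∈ A, y i) = 0 := by
    intro y
    refine Finset.sum_eq_zero fun A _ => ?_
    rcases A.eq_empty_or_nonempty with rfl | hA
    · rw [hc]; ring
    · rw [hall A hA]; ring
  exact h (by rw [key, key])

/-- Inclusion-maximality is preserved by support propagation:
if `S` is inclusion-maximal in `supp f̂₀` and each `Uᵢ` is inclusion-maximal in
`supp ĝᵢ`, then `T = ⋃_{i∈S} Uᵢ` is inclusion-maximal in `supp ĝ₀` and each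
`Vⱼ = {i ∈ S : j ∈ Uᵢ}` is inclusion-maximal in `supp f̂ⱼ`. -/
theorem stmt_8 (n m : ℕ)
    (f : Fin (m + 1) → (Fin n → ℝ) → ℝ) (g : Fin (n + 1) → (Fin m → ℝ) → ℝ)
    (fc : Fin (m + 1) → Finset (Fin n) → ℝ) (gc : Fin (n + 1) → Finset (Fin m) → ℝ)
    (hfexp : ∀ (j : Fin (m + 1)) (x : Fin n → ℝ),
      f j x = ∑ S : Finset (Fin n), fc j S * ∏ i ∈ S, x i)
    (hgexp : ∀ (i : Fin (n + 1)) (y : Fin m → ℝ),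
      g i y = ∑ T : Finset (Fin m), gc i T * ∏ j ∈ T, y j)
    (hbalf : ∀ j : Fin m, fc j.succ ∅ = 0)
    (hbalg : ∀ i : Fin n, gc i.succ ∅ = 0)
    (hncf : ∀ j : Fin m, ∃ x x' : Fin n → ℝ,
      (∀ i, x i = 1 ∨ x i = -1) ∧ (∀ i, x' i = 1 ∨ x' i = -1) ∧ f j.succ x ≠ f j.succ x')
    (hncg : ∀ i : Fin n, ∃ y y' : Fin m → ℝ,
      (∀ j, y j = 1 ∨ y j = -1) ∧ (∀ j, y' j = 1 ∨ y' j = -1) ∧ g i.succ y ≠ g i.succ y')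
    (hpoly : ∀ z : Fin n → Fin m → ℝ, (∀ i j, z i j = 1 ∨ z i j = -1) →
      f 0 (fun i => g i.succ (z i)) = g 0 (fun j => f j.succ (fun i => z i j)))
    (S : Finset (Fin n))
    (hSmax : fc 0 S ≠ 0 ∧ ∀ S' : Finset (Fin n), fc 0 S' ≠ 0 → S ⊆ S' → S = S')
    (U : Fin n → Finset (Fin m))
    (hUmax : ∀ i ∈ S, gc i.succ (U i) ≠ 0 ∧
      ∀ T : Finset (Fin m), gc i.succ T ≠ 0 → U i ⊆ T → U i = T) :
    (gc 0 (S.biUnion U) ≠ 0 ∧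
      ∀ T' : Finset (Fin m), gc 0 T' ≠ 0 → S.biUnion U ⊆ T' → S.biUnion U = T') ∧
    ∀ j ∈ S.biUnion U,
      fc j.succ (S.filter (fun i => j ∈ U i)) ≠ 0 ∧
      ∀ V : Finset (Fin n), fc j.succ V ≠ 0 →
        S.filter (fun i => j ∈ U i) ⊆ V → S.filter (fun i => j ∈ U i) = V := by
  classical
  set T : Finset (Fin m) := S.biUnion U with hTdef
  set V : Fin m → Finset (Fin n) := fun j => S.filter (fun i => j ∈ U i) with hVdef
  have hUne : ∀ i ∈ S, (U i).Nonempty := by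
    intro i hi
    rcases (U i).eq_empty_or_nonempty with h | h
    · exact absurd ((hUmax i hi).1) (by rw [h, hbalg]; simp)
    · exact h
  have hVne : ∀ j ∈ T, (V j).Nonempty := by
    intro j hj
    obtain ⟨i, hi, hij⟩ := Finset.mem_biUnion.1 hj
    exact ⟨i, Finset.mem_filter.2 ⟨hi, hij⟩⟩
  -- specialized central identity for colB sets
  have hcentral : ∀ (T' : Finset (Fin m)) (W : Fin m → Finset (Fin n)),
      (∀ j ∈ T', (W j).Nonempty) →
      fc 0 (rows (colB T' W)) *
          ∏ i ∈ rows (colB T' W), gc i.succ (T'.filter (fun j => i ∈ W j))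
        = gc 0 T' * ∏ j ∈ T', fc j.succ (W j) := by
    intro T' W hne
    have h := central f g fc gc hfexp hgexp hbalf hbalg hpoly (colB T' W)
    rw [rowsT_colB hne] at h
    have e1 : ∏ i ∈ rows (colB T' W), gc i.succ (rowset (colB T' W) i)
        = ∏ i ∈ rows (colB T' W), gc i.succ (T'.filter (fun j => i ∈ W j)) :=
      Finset.prod_congr rfl fun i _ => by rw [rowset_colB]
    have e2 : ∏ j ∈ T', fc j.succ (rowset ((colB T' W).image Prod.swap) j)
        = ∏ j ∈ T', fc j.succ (W j) :=
      Finset.prod_congr rfl fun j hj => by rw [rowsetT_colB, if_pos hj]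
    rw [e1, e2] at h
    exact h
  -- Part 0 : apply with T' = T, W = V
  have hrows0 : rows (colB T V) = S := by
    ext i
    rw [mem_rows_colB]
    constructor
    · rintro ⟨j, _, hiV⟩
      exact (Finset.mem_filter.1 hiV).1
    · intro hi
      obtain ⟨j, hj⟩ := hUne i hi
      exact ⟨j, Finset.mem_biUnion.2 ⟨i, hi, hj⟩, Finset.mem_filter.2 ⟨hi, hj⟩⟩
  have hfilt0 : ∀ i ∈ S, T.filter (fun j => i ∈ V j) = U i := by
    intro i hi
    ext j
    simp only [Finset.mem_filter, hVdef, hTdef, Finset.mem_biUnion]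
    constructor
    · rintro ⟨_, _, hij⟩
      exact hij
    · intro hij
      exact ⟨⟨i, hi, hij⟩, hi, hij⟩
  have key0 : fc 0 S * ∏ i ∈ S, gc i.succ (U i) = gc 0 T * ∏ j ∈ T, fc j.succ (V j) := by
    have h := hcentral T V hVne
    rw [hrows0] at h
    rw [← h]
    congr 1
    exact Finset.prod_congr rfl fun i hi => by rw [hfilt0 i hi]
  have hLHS0 : fc 0 S * ∏ i ∈ S, gc i.succ (U i) ≠ 0 :=
    mul_ne_zero hSmax.1 (Finset.prod_ne_zero_iff.2 fun i hi => (hUmax i hi).1)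
  rw [key0] at hLHS0
  have hgcT : gc 0 T ≠ 0 := left_ne_zero_of_mul hLHS0
  have hfcV : ∀ j ∈ T, fc j.succ (V j) ≠ 0 :=
    Finset.prod_ne_zero_iff.1 (right_ne_zero_of_mul hLHS0)
  -- the "push back" lemma
  have push : ∀ (T' : Finset (Fin m)) (W : Fin m → Finset (Fin n)),
      gc 0 T' ≠ 0 → (∀ j ∈ T', fc j.succ (W j) ≠ 0) → (∀ j ∈ T', (W j).Nonempty) →
      (∀ i ∈ S, ∀ j ∈ U i, j ∈ T' ∧ i ∈ W j) →
      ∀ j ∈ T', ∀ i ∈ W j, i ∈ S ∧ j ∈ U i := by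
    intro T' W hgc hfc hne hcompat
    have hRne : gc 0 T' * ∏ j ∈ T', fc j.succ (W j) ≠ 0 :=
      mul_ne_zero hgc (Finset.prod_ne_zero_iff.2 hfc)
    rw [← hcentral T' W hne] at hRne
    have hfcR : fc 0 (rows (colB T' W)) ≠ 0 := left_ne_zero_of_mul hRne
    have hgcR : ∀ i ∈ rows (colB T' W), gc i.succ (T'.filter (fun j => i ∈ W j)) ≠ 0 :=
      Finset.prod_ne_zero_iff.1 (right_ne_zero_of_mul hRne)
    have hSR : S ⊆ rows (colB T' W) := by
      intro i hi
      obtain ⟨j, hj⟩ := hUne i hi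
      obtain ⟨hjT', hiW⟩ := hcompat i hi j hj
      exact mem_rows_colB.2 ⟨j, hjT', hiW⟩
    have hSeq : S = rows (colB T' W) := hSmax.2 _ hfcR hSR
    have hUeq : ∀ i ∈ S, U i = T'.filter (fun j => i ∈ W j) := by
      intro i hi
      refine (hUmax i hi).2 _ (hgcR i (hSeq ▸ hi)) ?_
      intro j hj
      obtain ⟨hjT', hiW⟩ := hcompat i hi j hj
      exact Finset.mem_filter.2 ⟨hjT', hiW⟩
    intro j hj i hiW
    have hiR : i ∈ rows (colB T' W) := mem_rows_colB.2 ⟨j, hj, hiW⟩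
    have hiS : i ∈ S := hSeq ▸ hiR
    refine ⟨hiS, ?_⟩
    have := hUeq i hiS
    rw [this]
    exact Finset.mem_filter.2 ⟨hj, hiW⟩
  refine ⟨⟨hgcT, ?_⟩, ?_⟩
  · -- maximality of T in supp gc 0
    intro T' hgcT' hTT'
    -- choose witnesses W j
    have hex : ∀ j : Fin m, ∃ Wj : Finset (Fin n),
        j ∈ T' → (fc j.succ Wj ≠ 0 ∧ Wj.Nonempty ∧ (j ∈ T → V j ⊆ Wj)) := by
      intro j
      by_cases hjT : j ∈ T
      · exact ⟨V j, fun _ => ⟨hfcV j hjT, hVne j hjT, fun _ => Finset.Subset.refl _⟩⟩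
      · obtain ⟨x, x', _, _, hxx⟩ := hncf j
        rw [hfexp, hfexp] at hxx
        obtain ⟨A, hAne, hA⟩ := support_nonempty (hbalf j) hxx
        exact ⟨A, fun _ => ⟨hA, hAne, fun hjT' => absurd hjT' hjT⟩⟩
    choose W hW using hex
    have hconc := push T' W hgcT' (fun j hj => (hW j hj).1) (fun j hj => (hW j hj).2.1) ?compat
    case compat =>
      intro i hi j hj
      have hjT : j ∈ T := Finset.mem_biUnion.2 ⟨i, hi, hj⟩
      refine ⟨hTT' hjT, ?_⟩
      exact (hW j (hTT' hjT)).2.2 hjT (Finset.mem_filter.2 ⟨hi, hj⟩)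
    refine Finset.Subset.antisymm hTT' ?_
    intro j hj
    obtain ⟨i, hiW⟩ := (hW j hj).2.1
    obtain ⟨hiS, hjU⟩ := hconc j hj i hiW
    exact Finset.mem_biUnion.2 ⟨i, hiS, hjU⟩
  · -- maximality of each V j₀
    intro j₀ hj₀ 
    refine ⟨hfcV j₀ hj₀, ?_⟩
    intro Vbig hfcVbig hVsub
    set W : Fin m → Finset (Fin n) := fun j => if j = j₀ then Vbig else V j with hWdef
    have hconc := push T W hgcT ?fc ?ne ?compat
    case fc =>
      intro j hj
      by_cases h : j = j₀
      · subst h; simp only [hWdef, if_pos rfl]; exact hfcVbig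
      · simp only [hWdef, if_neg h]; exact hfcV j hj
    case ne =>
      intro j hj
      by_cases h : j = j₀
      · subst h; simp only [hWdef, if_pos rfl]
        exact (hVne _ hj).mono hVsub
      · simp only [hWdef, if_neg h]; exact hVne j hj
    case compat =>
      intro i hi j hj
      have hjT : j ∈ T := Finset.mem_biUnion.2 ⟨i, hi, hj⟩
      refine ⟨hjT, ?_⟩
      have hiV : i ∈ V j := Finset.mem_filter.2 ⟨hi, hj⟩
      by_cases h : j = j₀
      · subst h; simp only [hWdef, if_pos rfl]; exact hVsub hiV
      · simp only [hWdef, if_neg h]; exact hiV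
    refine Finset.Subset.antisymm hVsub ?_
    intro i hiV
    have hiW : i ∈ W j₀ := by simp only [hWdef, if_pos rfl]; exact hiV
    obtain ⟨hiS, hjU⟩ := hconc j₀ hj₀ i hiW
    exact Finset.mem_filter.2 ⟨hiS, hjU⟩
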